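/- Associativity of environment composition: for well-formed environments e1, e2, e3 with lev(e1) ≤ nl1, len(e2) = ol2, lev(e2) ≤ nl2, len(e3) = ol3, the environments A = {{e1, nl1, ol2, e2}, nl2 + (nl1 ∸ ol2), ol3, e3} and B = {e1, nl1, ol2 + (ol3 ∸ nl2), {e2, nl2, ol3, e3}} rewrite by the reading and merging rules to a common simple environment. -/

import Mathlib

/- Terms of the suspension calculus: constants, de Bruijn indices `#i`,
applications, abstractions, and suspensions `[t, ol, nl, e]`. -/
mutual
inductive Tm : Type where
  | const : Nat → Tm
  | idx : Nat → Tm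
  | app : Tm → Tm → Tm
  | lam : Tm → Tm
  | susp : Tm → Nat → Nat → Env → Tm
/-- Environments: `nil`, cons cells `(t,n)::e`, and merges `{e1, nl1, ol2, e2}`. -/
inductive Env : Type where
  | nil : Env
  | econs : Tm → Nat → Env → Env
  | merge : Env → Nat → Nat → Env → Env
end

/-- Length of an environment. -/
def Env.len : Env → Nat
  | .nil => 0
  | .econs _ _ e => 1 + Env.len e
  | .merge e1 nl1 _ e2 => Env.len e1 + (Env.len e2 - nl1)

/-- Level of an environment. -/
def Env.lev : Env → Nat
  | .nil => 0
  | .econs _ l _ => l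
  | .merge _ nl1 ol2 e2 => Env.lev e2 + (nl1 - ol2)

/- Well-formedness of suspension expressions. -/
mutual
inductive WfTm : Tm → Prop where
  | const : ∀ c, WfTm (.const c)
  | idx : ∀ i, 1 ≤ i → WfTm (.idx i)
  | app : ∀ {t1 t2}, WfTm t1 → WfTm t2 → WfTm (.app t1 t2)
  | lam : ∀ {t}, WfTm t → WfTm (.lam t)
  | susp : ∀ {t e} (ol nl : Nat), WfTm t → WfEnv e → Env.len e = ol →
      Env.lev e ≤ nl → WfTm (.susp t ol nl e)
inductive WfEnv : Env → Prop where
  | nil : WfEnv .nil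
  | econs : ∀ {t e} (l : Nat), WfTm t → WfEnv e → Env.lev e ≤ l → WfEnv (.econs t l e)
  | merge : ∀ {e1 e2} (nl1 ol2 : Nat), WfEnv e1 → WfEnv e2 → Env.lev e1 ≤ nl1 →
      Env.len e2 = ol2 → WfEnv (.merge e1 nl1 ol2 e2)
end

/- One-step rewriting by the reading rules (r1)-(r6) and merging rules
(m1)-(m6), applied at any subexpression. -/
mutual
inductive SR : Tm → Tm → Prop where
  | r1 : ∀ c ol nl e, SR (.susp (.const c) ol nl e) (.const c)
  | r2 : ∀ i nl, 1 ≤ i → SR (.susp (.idx i) 0 nl .nil) (.idx (i + nl))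
  | r3 : ∀ ol nl t l e, SR (.susp (.idx 1) ol nl (.econs t l e)) (.susp t 0 (nl - l) .nil)
  | r4 : ∀ i ol nl t l e, 1 < i →
      SR (.susp (.idx i) ol nl (.econs t l e)) (.susp (.idx (i - 1)) (ol - 1) nl e)
  | r5 : ∀ t1 t2 ol nl e,
      SR (.susp (.app t1 t2) ol nl e) (.app (.susp t1 ol nl e) (.susp t2 ol nl e))
  | r6 : ∀ t ol nl e,
      SR (.susp (.lam t) ol nl e)
         (.lam (.susp t (ol + 1) (nl + 1) (.econs (.idx 1) (nl + 1) e)))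
  | m1 : ∀ t ol1 nl1 e1 ol2 nl2 e2,
      SR (.susp (.susp t ol1 nl1 e1) ol2 nl2 e2)
         (.susp t (ol1 + (ol2 - nl1)) (nl2 + (nl1 - ol2)) (.merge e1 nl1 ol2 e2))
  | appL : ∀ {t1 t1'} (t2 : Tm), SR t1 t1' → SR (.app t1 t2) (.app t1' t2)
  | appR : ∀ (t1 : Tm) {t2 t2'}, SR t2 t2' → SR (.app t1 t2) (.app t1 t2')
  | lamC : ∀ {t t'}, SR t t' → SR (.lam t) (.lam t')
  | suspT : ∀ {t t'} ol nl e, SR t t' → SR (.susp t ol nl e) (.susp t' ol nl e)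
  | suspE : ∀ t ol nl {e e'}, SRE e e' → SR (.susp t ol nl e) (.susp t ol nl e')
inductive SRE : Env → Env → Prop where
  | m2 : ∀ e1 nl1, SRE (.merge e1 nl1 0 .nil) e1
  | m3 : ∀ ol2 e2, SRE (.merge .nil 0 ol2 e2) e2
  | m4 : ∀ nl1 ol2 t l e2, 1 ≤ nl1 →
      SRE (.merge .nil nl1 ol2 (.econs t l e2)) (.merge .nil (nl1 - 1) (ol2 - 1) e2)
  | m5 : ∀ t n e1 nl1 ol2 s l e2, n < nl1 →
      SRE (.merge (.econs t n e1) nl1 ol2 (.econs s l e2))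
          (.merge (.econs t n e1) (nl1 - 1) (ol2 - 1) e2)
  | m6 : ∀ t n e1 ol2 s l e2,
      SRE (.merge (.econs t n e1) n ol2 (.econs s l e2))
          (.econs (.susp t ol2 l (.econs s l e2)) (l + (n - ol2))
                  (.merge e1 n ol2 (.econs s l e2)))
  | consT : ∀ {t t'} l e, SR t t' → SRE (.econs t l e) (.econs t' l e)
  | consE : ∀ t l {e e'}, SRE e e' → SRE (.econs t l e) (.econs t l e')
  | mergeL : ∀ {e1 e1'} nl1 ol2 e2, SRE e1 e1' →
      SRE (.merge e1 nl1 ol2 e2) (.merge e1' nl1 ol2 e2)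
  | mergeR : ∀ e1 nl1 ol2 {e2 e2'}, SRE e2 e2' →
      SRE (.merge e1 nl1 ol2 e2) (.merge e1 nl1 ol2 e2')
end

/-- Simple environments: nil-terminated lists of bindings (no merges). -/
inductive SimpleEnv : Env → Prop where
  | nil : SimpleEnv .nil
  | econs : ∀ t l {e}, SimpleEnv e → SimpleEnv (.econs t l e)
open Relation

/-- Merge two simple environments into a simple environment (normal form of
the merging rules). -/
def mrg : Env → Nat → Nat → Env → Env
  | e1, _, _, .nil => e1
  | .nil, 0, _, e2 => e2
  | .nil, nl1+1, ol2, .econs _ _ e2 => mrg .nil nl1 (ol2-1) e2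
  | .econs t n e1, nl1, ol2, .econs s l e2 =>
      if n < nl1 then mrg (.econs t n e1) (nl1-1) (ol2-1) e2
      else .econs (.susp t ol2 l (.econs s l e2)) (l + (n - ol2))
             (mrg e1 nl1 ol2 (.econs s l e2))
  | _, _, _, _ => .nil
termination_by e1 _ _ e2 => (sizeOf e2, sizeOf e1)

lemma mrg_nil2 (e1 : Env) (nl1 ol2 : Nat) : mrg e1 nl1 ol2 .nil = e1 := by
  cases e1 <;> simp [mrg]

lemma mrg_nil_zero (e2 : Env) (ol2 : Nat) : mrg .nil 0 ol2 e2 = e2 := by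
  cases e2 <;> simp [mrg]

lemma mrg_nil_succ (n ol2 : Nat) (s : Tm) (l : Nat) (e2 : Env) :
    mrg .nil (n+1) ol2 (.econs s l e2) = mrg .nil n (ol2-1) e2 := by
  simp [mrg]

lemma mrg_cons_lt {n nl1 : Nat} (h : n < nl1) (t : Tm) (e1 : Env) (ol2 : Nat)
    (s : Tm) (l : Nat) (e2 : Env) :
    mrg (.econs t n e1) nl1 ol2 (.econs s l e2)
      = mrg (.econs t n e1) (nl1-1) (ol2-1) e2 := by
  rw [mrg]; simp [h]

lemma mrg_cons_ge {n nl1 : Nat} (h : ¬ n < nl1) (t : Tm) (e1 : Env) (ol2 : Nat)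
    (s : Tm) (l : Nat) (e2 : Env) :
    mrg (.econs t n e1) nl1 ol2 (.econs s l e2)
      = .econs (.susp t ol2 l (.econs s l e2)) (l + (n - ol2))
          (mrg e1 nl1 ol2 (.econs s l e2)) := by
  rw [mrg]; simp [h]

lemma rtgConsT {t t' : Tm} (l : Nat) (e : Env) (h : ReflTransGen SR t t') :
    ReflTransGen SRE (.econs t l e) (.econs t' l e) :=
  ReflTransGen.lift (fun x => Env.econs x l e) (fun _ _ hr => SRE.consT l e hr) _ _ h

lemma rtgConsE (t : Tm) (l : Nat) {e e' : Env} (h : ReflTransGen SRE e e') :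
    ReflTransGen SRE (.econs t l e) (.econs t l e') :=
  ReflTransGen.lift (fun x => Env.econs t l x) (fun _ _ hr => SRE.consE t l hr) _ _ h

lemma rtgMergeL {e1 e1' : Env} (nl1 ol2 : Nat) (e2 : Env)
    (h : ReflTransGen SRE e1 e1') :
    ReflTransGen SRE (.merge e1 nl1 ol2 e2) (.merge e1' nl1 ol2 e2) :=
  ReflTransGen.lift (fun x => Env.merge x nl1 ol2 e2) (fun _ _ hr => SRE.mergeL nl1 ol2 e2 hr) _ _ h

lemma rtgMergeR (e1 : Env) (nl1 ol2 : Nat) {e2 e2' : Env}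
    (h : ReflTransGen SRE e2 e2') :
    ReflTransGen SRE (.merge e1 nl1 ol2 e2) (.merge e1 nl1 ol2 e2') :=
  ReflTransGen.lift (fun x => Env.merge e1 nl1 ol2 x) (fun _ _ hr => SRE.mergeR e1 nl1 ol2 hr) _ _ h

lemma rtgSuspE (t : Tm) (ol nl : Nat) {e e' : Env} (h : ReflTransGen SRE e e') :
    ReflTransGen SR (.susp t ol nl e) (.susp t ol nl e') :=
  ReflTransGen.lift (fun x => Tm.susp t ol nl x) (fun _ _ hr => SR.suspE t ol nl hr) _ _ h

lemma mrg_main : ∀ (e2 e1 : Env) (nl1 ol2 : Nat),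
    SimpleEnv e1 → SimpleEnv e2 → WfEnv e1 → WfEnv e2 →
    Env.lev e1 ≤ nl1 → Env.len e2 = ol2 →
    SimpleEnv (mrg e1 nl1 ol2 e2) ∧ WfEnv (mrg e1 nl1 ol2 e2) ∧
      Env.len (mrg e1 nl1 ol2 e2) = Env.len e1 + (ol2 - nl1) ∧
      Env.lev (mrg e1 nl1 ol2 e2) ≤ Env.lev e2 + (nl1 - ol2) ∧
      ReflTransGen SRE (.merge e1 nl1 ol2 e2) (mrg e1 nl1 ol2 e2)
  | .nil, e1, nl1, ol2, hs1, hs2, hw1, hw2, h1, h2 => by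
    have hol2 : ol2 = 0 := by simpa [Env.len] using h2.symm
    subst hol2
    rw [mrg_nil2]
    refine ⟨hs1, hw1, by simp, by simpa [Env.lev] using h1,
      ReflTransGen.single (SRE.m2 e1 nl1)⟩
  | .econs s l e2, .nil, 0, ol2, hs1, hs2, hw1, hw2, h1, h2 => by
    rw [mrg_nil_zero]
    exact ⟨hs2, hw2, by simp [Env.len, ← h2], by simp [Env.lev],
      ReflTransGen.single (SRE.m3 ol2 _)⟩
  | .econs s l e2, .nil, w+1, ol2, hs1, hs2, hw1, hw2, h1, h2 => by
    have hol2 : ol2 = 1 + Env.len e2 := by simpa [Env.len] using h2.symm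
    have hs2' : SimpleEnv e2 := by cases hs2; assumption
    have hw2' : WfEnv e2 := by cases hw2; assumption
    have hlev2 : Env.lev e2 ≤ l := by cases hw2; assumption
    obtain ⟨a, b, c, d, e⟩ := mrg_main e2 .nil w (ol2-1) SimpleEnv.nil hs2' WfEnv.nil hw2'
      (by simp [Env.lev]) (by omega)
    rw [mrg_nil_succ]
    refine ⟨a, b, by simp [Env.len] at c ⊢; omega, ?_, ?_⟩
    · simp [Env.lev] at d ⊢; omega
    · exact ReflTransGen.head (SRE.m4 (w+1) ol2 s l e2 (by omega)) (by simpa using e)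
  | .econs s l e2, .econs t n e1, nl1, ol2, hs1, hs2, hw1, hw2, h1, h2 => by
    have hol2 : ol2 = 1 + Env.len e2 := by simpa [Env.len] using h2.symm
    have hs1' : SimpleEnv e1 := by cases hs1; assumption
    have hw1' : WfEnv e1 := by cases hw1; assumption
    have hwt : WfTm t := by cases hw1; assumption
    have hlev1 : Env.lev e1 ≤ n := by cases hw1; assumption
    have hs2' : SimpleEnv e2 := by cases hs2; assumption
    have hw2' : WfEnv e2 := by cases hw2; assumption
    have hlev2 : Env.lev e2 ≤ l := by cases hw2; assumption
    have hn : n ≤ nl1 := by simpa [Env.lev] using h1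
    by_cases hlt : n < nl1
    · obtain ⟨a, b, c, d, e⟩ := mrg_main e2 (.econs t n e1) (nl1-1) (ol2-1) hs1 hs2' hw1 hw2'
        (by simp [Env.lev]; omega) (by omega)
      rw [mrg_cons_lt hlt]
      refine ⟨a, b, by simp [Env.len] at c ⊢; omega, ?_, ?_⟩
      · simp [Env.lev] at d ⊢; omega
      · exact ReflTransGen.head (SRE.m5 t n e1 nl1 ol2 s l e2 hlt) e
    · have hn' : n = nl1 := by omega
      subst hn'
      obtain ⟨a, b, c, d, e⟩ := mrg_main (.econs s l e2) e1 n ol2 hs1' hs2 hw1' hw2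
        (by omega) h2
      rw [mrg_cons_ge hlt]
      refine ⟨SimpleEnv.econs _ _ a, ?_, by simp [Env.len] at c ⊢; omega, ?_, ?_⟩
      · refine WfEnv.econs _ (WfTm.susp ol2 l hwt hw2 h2 (by simp [Env.lev])) b ?_
        simp [Env.lev] at d ⊢; omega
      · simp [Env.lev]
      · exact ReflTransGen.head (SRE.m6 t n e1 ol2 s l e2) (rtgConsE _ _ e)
  | .merge _ _ _ _, e1, nl1, ol2, hs1, hs2, hw1, hw2, h1, h2 => by cases hs2
  | .econs _ _ _, .merge _ _ _ _, nl1, ol2, hs1, hs2, hw1, hw2, h1, h2 => by cases hs1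
termination_by e2 e1 => (sizeOf e2, sizeOf e1)

lemma mrg_drop {I : Env} (hsI : SimpleEnv I) {N : Nat} (hN : Env.lev I < N)
    (ol3 : Nat) (u : Tm) (m : Nat) (e3 : Env) :
    mrg I N ol3 (.econs u m e3) = mrg I (N-1) (ol3-1) e3 := by
  cases hsI with
  | nil =>
    simp [Env.lev] at hN
    obtain ⟨k, rfl⟩ : ∃ k, N = k + 1 := ⟨N - 1, by omega⟩
    simp [mrg_nil_succ]
  | econs t l h =>
    simp [Env.lev] at hN
    rw [mrg_cons_lt hN]

lemma toSimple : ∀ (e : Env), WfEnv e →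
    ∃ s, ReflTransGen SRE e s ∧ SimpleEnv s ∧ WfEnv s ∧
      Env.len s = Env.len e ∧ Env.lev s ≤ Env.lev e
  | .nil, _ => ⟨.nil, ReflTransGen.refl, SimpleEnv.nil, WfEnv.nil, rfl, le_refl _⟩
  | .econs t l e, hw => by
    have hw' : WfEnv e := by cases hw; assumption
    have hwt : WfTm t := by cases hw; assumption
    have hlev : Env.lev e ≤ l := by cases hw; assumption
    obtain ⟨s, hstep, hs, hws, hlen, hl⟩ := toSimple e hw'
    exact ⟨.econs t l s, rtgConsE t l hstep, SimpleEnv.econs t l hs,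
      WfEnv.econs l hwt hws (le_trans hl hlev), by simp [Env.len, hlen],
      by simp [Env.lev]⟩
  | .merge e1 nl1 ol2 e2, hw => by
    have hw1 : WfEnv e1 := by cases hw; assumption
    have hw2 : WfEnv e2 := by cases hw; assumption
    have hlev1 : Env.lev e1 ≤ nl1 := by cases hw; assumption
    have hlen2 : Env.len e2 = ol2 := by cases hw; assumption
    obtain ⟨s1, st1, hs1, hws1, hlen1, hl1⟩ := toSimple e1 hw1
    obtain ⟨s2, st2, hs2, hws2, hlen2', hl2⟩ := toSimple e2 hw2
    obtain ⟨a, b, c, d, e⟩ := mrg_main s2 s1 nl1 ol2 hs1 hs2 hws1 hws2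
      (le_trans hl1 hlev1) (by omega)
    refine ⟨mrg s1 nl1 ol2 s2, ?_, a, b, by simp [Env.len]; omega,
      by simp [Env.lev]; omega⟩
    exact ((rtgMergeL nl1 ol2 e2 st1).trans (rtgMergeR s1 nl1 ol2 st2)).trans e

lemma assocSimple : ∀ (e3 e2 e1 : Env) (nl1 ol2 nl2 ol3 : Nat),
    SimpleEnv e1 → SimpleEnv e2 → SimpleEnv e3 →
    WfEnv e1 → WfEnv e2 → WfEnv e3 →
    Env.lev e1 ≤ nl1 → Env.len e2 = ol2 → Env.lev e2 ≤ nl2 → Env.len e3 = ol3 →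
    ∃ C : Env, SimpleEnv C ∧
      ReflTransGen SRE (mrg (mrg e1 nl1 ol2 e2) (nl2 + (nl1 - ol2)) ol3 e3) C ∧
      ReflTransGen SRE (mrg e1 nl1 (ol2 + (ol3 - nl2)) (mrg e2 nl2 ol3 e3)) C
  | .nil, e2, e1, nl1, ol2, nl2, ol3, hs1, hs2, hs3, hw1, hw2, hw3, h1, h2, h3, h4 => by
    have hol3 : ol3 = 0 := by simpa [Env.len] using h4.symm
    subst hol3
    rw [mrg_nil2, mrg_nil2]
    have harith : ol2 + (0 - nl2) = ol2 := by omega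
    rw [harith]
    exact ⟨mrg e1 nl1 ol2 e2, (mrg_main e2 e1 nl1 ol2 hs1 hs2 hw1 hw2 h1 h2).1,
      ReflTransGen.refl, ReflTransGen.refl⟩
  | .econs u m e3', .nil, e1, nl1, ol2, nl2, ol3, hs1, hs2, hs3, hw1, hw2, hw3, h1, h2, h3, h4 => by
    have hol2 : ol2 = 0 := by simpa [Env.len] using h2.symm
    subst hol2
    have hol3 : ol3 = Env.len e3' + 1 := by simp [Env.len] at h4; omega
    have hs3' : SimpleEnv e3' := by cases hs3; assumption
    have hw3' : WfEnv e3' := by cases hw3; assumption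
    match nl2 with
    | 0 =>
      rw [mrg_nil2, mrg_nil_zero]
      have ha1 : 0 + (nl1 - 0) = nl1 := by omega
      have ha2 : 0 + (ol3 - 0) = ol3 := by omega
      rw [ha1, ha2]
      exact ⟨mrg e1 nl1 ol3 (.econs u m e3'),
        (mrg_main _ e1 nl1 ol3 hs1 hs3 hw1 hw3 h1 h4).1,
        ReflTransGen.refl, ReflTransGen.refl⟩
    | k+1 =>
      obtain ⟨C, hC, sA, sB⟩ := assocSimple e3' .nil e1 nl1 0 k (ol3-1)
        hs1 SimpleEnv.nil hs3' hw1 WfEnv.nil hw3' h1 (by simp [Env.len])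
        (by simp [Env.lev]) (by omega)
      rw [mrg_nil2] at sA
      refine ⟨C, hC, ?_, ?_⟩
      · rw [mrg_nil2, mrg_drop hs1 (show Env.lev e1 < (k+1) + (nl1 - 0) by omega)]
        have ha : (k+1) + (nl1 - 0) - 1 = k + (nl1 - 0) := by omega
        rw [ha]
        exact sA
      · rw [mrg_nil_succ]
        have ha : 0 + (ol3 - (k+1)) = 0 + ((ol3-1) - k) := by omega
        rw [ha]
        exact sB
  | .econs u m e3', .econs s p e2', e1, nl1, ol2, nl2, ol3, hs1, hs2, hs3, hw1, hw2, hw3, h1, h2, h3, h4 => by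
    have hol2 : ol2 = Env.len e2' + 1 := by simp [Env.len] at h2; omega
    have hol3 : ol3 = Env.len e3' + 1 := by simp [Env.len] at h4; omega
    have hs2' : SimpleEnv e2' := by cases hs2; assumption
    have hw2' : WfEnv e2' := by cases hw2; assumption
    have hws : WfTm s := by cases hw2; assumption
    have hlev2 : Env.lev e2' ≤ p := by cases hw2; assumption
    have hs3' : SimpleEnv e3' := by cases hs3; assumption
    have hw3' : WfEnv e3' := by cases hw3; assumption
    have hp : p ≤ nl2 := by simpa [Env.lev] using h3
    by_cases hplt : p < nl2
    · -- (i) the inner right merge does an (m5)-like step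
      obtain ⟨C, hC, sA, sB⟩ := assocSimple e3' (.econs s p e2') e1 nl1 ol2 (nl2-1) (ol3-1)
        hs1 hs2 hs3' hw1 hw2 hw3' h1 h2 (by simp [Env.lev]; omega) (by omega)
      obtain ⟨hIs, _, _, hIlev, _⟩ := mrg_main (.econs s p e2') e1 nl1 ol2 hs1 hs2 hw1 hw2 h1 h2
      refine ⟨C, hC, ?_, ?_⟩
      · rw [mrg_drop hIs (show Env.lev (mrg e1 nl1 ol2 (.econs s p e2')) < nl2 + (nl1 - ol2) by
          simp [Env.lev] at hIlev; omega)]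
        have ha : nl2 + (nl1 - ol2) - 1 = (nl2-1) + (nl1 - ol2) := by omega
        rw [ha]
        exact sA
      · rw [mrg_cons_lt hplt]
        have ha : ol2 + (ol3 - nl2) = ol2 + ((ol3-1) - (nl2-1)) := by omega
        rw [ha]
        exact sB
    · -- p = nl2 : the inner right merge does an (m6)-like step
      have hpe : p = nl2 := by omega
      subst hpe
      match e1, hs1 with
      | .merge _ _ _ _, hs1 => exact absurd hs1 (by intro h; cases h)
      | .nil, hs1 =>
        match nl1 with
        | 0 =>
          refine ⟨mrg (.econs s p e2') p ol3 (.econs u m e3'),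
            (mrg_main _ _ p ol3 hs2 hs3 hw2 hw3 h3 h4).1, ?_, ?_⟩
          · rw [mrg_nil_zero]
            have ha : p + (0 - ol2) = p := by omega
            rw [ha]
          · rw [mrg_nil_zero]
        | w+1 =>
          obtain ⟨C, hC, sA, sB⟩ := assocSimple (.econs u m e3') e2' .nil w (ol2-1) p ol3
            SimpleEnv.nil hs2' hs3 WfEnv.nil hw2' hw3 (by simp [Env.lev])
            (by omega) (by omega) h4
          refine ⟨C, hC, ?_, ?_⟩
          · rw [mrg_nil_succ]
            have ha : p + ((w+1) - ol2) = p + (w - (ol2-1)) := by omega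
            rw [ha]
            exact sA
          · rw [mrg_cons_ge (show ¬ p < p by omega), mrg_nil_succ]
            have ha : ol2 + (ol3 - p) - 1 = (ol2-1) + (ol3 - p) := by omega
            rw [ha]
            exact sB
      | .econs t n e1', hs1 =>
        have hn : n ≤ nl1 := by simpa [Env.lev] using h1
        have hs1' : SimpleEnv e1' := by cases hs1; assumption
        have hw1' : WfEnv e1' := by cases hw1; assumption
        have hwt : WfTm t := by cases hw1; assumption
        have hlev1 : Env.lev e1' ≤ n := by cases hw1; assumption
        by_cases hnlt : n < nl1
        · -- (ii.c)
          obtain ⟨C, hC, sA, sB⟩ := assocSimple (.econs u m e3') e2' (.econs t n e1')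
            (nl1-1) (ol2-1) p ol3 hs1 hs2' hs3 hw1 hw2' hw3
            (by simp [Env.lev]; omega) (by omega) (by omega) h4
          refine ⟨C, hC, ?_, ?_⟩
          · rw [mrg_cons_lt hnlt]
            have ha : p + (nl1 - ol2) = p + ((nl1-1) - (ol2-1)) := by omega
            rw [ha]
            exact sA
          · rw [mrg_cons_ge (show ¬ p < p by omega), mrg_cons_lt hnlt]
            have ha : ol2 + (ol3 - p) - 1 = (ol2-1) + (ol3 - p) := by omega
            rw [ha]
            exact sB
        · -- (ii.d) both sides do an (m6)-like step on the head of e1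
          have hne : n = nl1 := by omega
          subst hne
          obtain ⟨C', hC', sA', sB'⟩ := assocSimple (.econs u m e3') (.econs s p e2') e1'
            n ol2 p ol3 hs1' hs2 hs3 hw1' hw2 hw3 hlev1 h2 h3 h4
          -- notation
          set e2c : Env := .econs s p e2' with he2c
          set e3c : Env := .econs u m e3' with he3c
          set X' : Env := mrg e2' p ol3 e3c with hX'
          set S : Tm := .susp s ol3 m e3c with hS
          set L : Nat := m + (p - ol3) with hL
          have hXeq : mrg e2c p ol3 e3c = .econs S L X' :=
            mrg_cons_ge (show ¬ p < p by omega) s e2' ol3 u m e3'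
          set OL : Nat := ol2 + (ol3 - p) with hOL
          set T3 : Tm := .susp t OL L (.econs S L X') with hT3
          set r' : Nat := L + (n - OL) with hr'
          refine ⟨.econs T3 r' C', SimpleEnv.econs _ _ hC', ?_, ?_⟩
          · -- A side
            rw [mrg_cons_ge (show ¬ n < n by omega)]
            rw [mrg_cons_ge (show ¬ p + (n - ol2) < p + (n - ol2) by omega)]
            have hra : m + (p + (n - ol2) - ol3) = r' := by rw [hr', hL, hOL]; omega
            rw [hra]
            have hT2T3 : ReflTransGen SR
                (.susp (.susp t ol2 p e2c) ol3 m e3c) T3 := by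
              refine ReflTransGen.head (SR.m1 t ol2 p e2c ol3 m e3c) ?_
              rw [hT3, hOL, hL]
              refine rtgSuspE t _ _ ?_
              rw [← hXeq]
              exact (mrg_main e3c e2c p ol3 hs2 hs3 hw2 hw3 (le_refl _) h4).2.2.2.2
            refine ReflTransGen.trans (rtgConsT _ _ hT2T3) ?_
            exact rtgConsE _ _ sA'
          · -- B side
            rw [hXeq, mrg_cons_ge (show ¬ n < n by omega)]
            refine rtgConsE _ _ ?_
            rw [← hXeq]
            exact sB'
termination_by e3 e2 e1 => (sizeOf e3, sizeOf e2, sizeOf e1)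

/-- associativity of environment composition.  The two ways of
composing three (well-formed) environments via merges rewrite, using the
reading and merging rules, to a common simple environment. -/
theorem merge_associativity :
    ∀ (e1 e2 e3 : Env) (nl1 ol2 nl2 ol3 : Nat),
      WfEnv e1 → WfEnv e2 → WfEnv e3 →
      Env.lev e1 ≤ nl1 → Env.len e2 = ol2 → Env.lev e2 ≤ nl2 → Env.len e3 = ol3 →
      ∃ C : Env, SimpleEnv C ∧
        Relation.ReflTransGen SRE
          (.merge (.merge e1 nl1 ol2 e2) (nl2 + (nl1 - ol2)) ol3 e3) C ∧
        Relation.ReflTransGen SRE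
          (.merge e1 nl1 (ol2 + (ol3 - nl2)) (.merge e2 nl2 ol3 e3)) C := by
  intro e1 e2 e3 nl1 ol2 nl2 ol3 hw1 hw2 hw3 h1 h2 h3 h4
  obtain ⟨s1, st1, hs1, hws1, hlen1, hl1⟩ := toSimple e1 hw1
  obtain ⟨s2, st2, hs2, hws2, hlen2, hl2⟩ := toSimple e2 hw2
  obtain ⟨s3, st3, hs3, hws3, hlen3, hl3⟩ := toSimple e3 hw3
  have H12 := mrg_main s2 s1 nl1 ol2 hs1 hs2 hws1 hws2 (by omega) (by omega)
  have H23 := mrg_main s3 s2 nl2 ol3 hs2 hs3 hws2 hws3 (by omega) (by omega)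
  obtain ⟨C, hC, sA, sB⟩ := assocSimple s3 s2 s1 nl1 ol2 nl2 ol3 hs1 hs2 hs3
    hws1 hws2 hws3 (by omega) (by omega) (by omega) (by omega)
  refine ⟨C, hC, ?_, ?_⟩
  · refine ReflTransGen.trans
      (rtgMergeL _ _ _ ((rtgMergeL _ _ _ st1).trans (rtgMergeR _ _ _ st2))) ?_
    refine ReflTransGen.trans (rtgMergeR _ _ _ st3) ?_
    refine ReflTransGen.trans (rtgMergeL _ _ _ H12.2.2.2.2) ?_
    have Houter := mrg_main s3 (mrg s1 nl1 ol2 s2) (nl2 + (nl1 - ol2)) ol3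
      H12.1 hs3 H12.2.1 hws3 (by omega) (by omega)
    exact Houter.2.2.2.2.trans sA
  · refine ReflTransGen.trans
      (rtgMergeR _ _ _ ((rtgMergeL _ _ _ st2).trans (rtgMergeR _ _ _ st3))) ?_
    refine ReflTransGen.trans (rtgMergeL _ _ _ st1) ?_
    refine ReflTransGen.trans (rtgMergeR _ _ _ H23.2.2.2.2) ?_
    have Houter := mrg_main (mrg s2 nl2 ol3 s3) s1 nl1 (ol2 + (ol3 - nl2))
      hs1 H23.1 hws1 H23.2.1 (by omega) (by omega)
    exact Houter.2.2.2.2.trans sB
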